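/- Let N and N₁ be compactly supported distribution functions taking finitely many values, let ΔN := N₁ − N, N_θ := N + θ·ΔN for θ ∈ [0,1], u_θ := ∫₀^∞ N_θ(t) dt, u_Δ := ∫₀^∞ |ΔN(t)| dt, and Δu := ∫₀^∞ ΔN(t) dt. Then −d²/dθ² [ u*(N_θ) ] ≥ (u_Δ)²/u_θ ≥ (Δu)²/u_θ. -/

import Mathlib

open MeasureTheory Set

noncomputable section

/-- `ψ₀(s) = s·ln(e/s)` (with the value `0` at `s = 0`). -/
def psi0 (s : ℝ) : ℝ := s * Real.log (Real.exp 1 / s)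

/-- A distribution function: decreasing on `(0,∞)` with values in `[0,1]`. -/
def IsDistrib (N : ℝ → ℝ) : Prop :=
  (∀ t, 0 < t → 0 ≤ N t ∧ N t ≤ 1) ∧ AntitoneOn N (Ioi 0)

/-- `u(N) = ∫₀^∞ N(t) dt`. -/
def uFn (N : ℝ → ℝ) : ℝ := ∫ t in Ioi (0 : ℝ), N t

/-- `u*(N) = ∫₀^∞ ψ₀(N(t)) dt`. -/
def ustarFn (N : ℝ → ℝ) : ℝ := ∫ t in Ioi (0 : ℝ), psi0 (N t)

/-- Concavity of `u*` along segments: for compactly supported distribution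
functions `N, N₁` taking finitely many values, with `ΔN = N₁ − N` and
`N_θ = N + θΔN`, one has `−d²/dθ² u*(N_θ) ≥ u_Δ²/u_θ ≥ (Δu)²/u_θ`. -/
lemma psi0_hasDerivAt {s : ℝ} (hs : 0 < s) : HasDerivAt psi0 (-Real.log s) s := by
  have h1 : HasDerivAt (fun x : ℝ => x - x * Real.log x) (-Real.log s) s := by
    have h2 := (hasDerivAt_id s).mul (Real.hasDerivAt_log hs.ne')
    have h3 := (hasDerivAt_id s).sub h2
    rw [show (1 - (1 * Real.log s + id s * s⁻¹)) = -Real.log s by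
      simp only [id_eq, one_mul, mul_inv_cancel₀ hs.ne']; ring] at h3
    exact h3
  refine h1.congr_of_eventuallyEq ?_
  filter_upwards [eventually_gt_nhds hs] with x hx
  rw [psi0, Real.log_div (Real.exp_ne_zero 1) hx.ne', Real.log_exp]
  ring

lemma integral_decomp (N N₁ : ℝ → ℝ) (hN : IsDistrib N) (hN₁ : IsDistrib N₁)
    (T : ℝ) (hT : ∀ t ≥ T, N t = 0 ∧ N₁ t = 0)
    (F : Finset (ℝ × ℝ))
    (hF : ∀ t, 0 < t → (N t, N₁ t) ≠ ((0:ℝ),(0:ℝ)) → (N t, N₁ t) ∈ F)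
    (h00 : ((0:ℝ),(0:ℝ)) ∉ F)
    (g : ℝ → ℝ → ℝ) (hg : g 0 0 = 0) :
    ∫ t in Ioi (0:ℝ), g (N t) (N₁ t) =
      ∑ p ∈ F, (volume {t : ℝ | 0 < t ∧ N t = p.1 ∧ N₁ t = p.2}).toReal * g p.1 p.2 := by
  have hAmeas : ∀ p : ℝ × ℝ, MeasurableSet {t : ℝ | 0 < t ∧ N t = p.1 ∧ N₁ t = p.2} := by
    intro p
    apply Set.OrdConnected.measurableSet
    constructor
    rintro x ⟨hx0, hx1, hx2⟩ y ⟨hy0, hy1, hy2⟩ z hz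
    have hz0 : 0 < z := lt_of_lt_of_le hx0 hz.1
    refine ⟨hz0, le_antisymm ?_ ?_, le_antisymm ?_ ?_⟩
    · have := hN.2 hx0 hz0 hz.1; rw [hx1] at this; exact this
    · have := hN.2 hz0 hy0 hz.2; rw [hy1] at this; exact this
    · have := hN₁.2 hx0 hz0 hz.1; rw [hx2] at this; exact this
    · have := hN₁.2 hz0 hy0 hz.2; rw [hy2] at this; exact this
  have hAfin : ∀ p ∈ F, volume {t : ℝ | 0 < t ∧ N t = p.1 ∧ N₁ t = p.2} < ⊤ := by
    intro p hp
    have hsub : {t : ℝ | 0 < t ∧ N t = p.1 ∧ N₁ t = p.2} ⊆ Ioc 0 T := by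
      rintro t ⟨ht0, ht1, ht2⟩
      refine ⟨ht0, ?_⟩
      by_contra h
      push_neg at h
      obtain ⟨e1, e2⟩ := hT t h.le
      have hpe : p = ((0:ℝ),(0:ℝ)) := Prod.ext (by rw [← ht1, e1]) (by rw [← ht2, e2])
      exact h00 (hpe ▸ hp)
    exact lt_of_le_of_lt (measure_mono hsub) measure_Ioc_lt_top
  have hpt : ∀ t ∈ Ioi (0:ℝ), g (N t) (N₁ t) =
      ∑ p ∈ F, ({t : ℝ | 0 < t ∧ N t = p.1 ∧ N₁ t = p.2}).indicator
        (fun _ => g p.1 p.2) t := by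
    intro t ht
    by_cases h0 : (N t, N₁ t) = ((0:ℝ), (0:ℝ))
    · rw [Prod.ext_iff] at h0
      simp only at h0
      rw [h0.1, h0.2, hg]
      symm
      apply Finset.sum_eq_zero
      intro p hp
      apply indicator_of_notMem
      rintro ⟨ht0, ht1, ht2⟩
      have hpe : p = ((0:ℝ),(0:ℝ)) := Prod.ext (by rw [← ht1, h0.1]) (by rw [← ht2, h0.2])
      exact h00 (hpe ▸ hp)
    · have hq := hF t ht h0
      rw [Finset.sum_eq_single (N t, N₁ t)]
      · have hmem : t ∈ {s : ℝ | 0 < s ∧ N s = (N t, N₁ t).1 ∧ N₁ s = (N t, N₁ t).2} :=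
          ⟨ht, rfl, rfl⟩
        exact (indicator_of_mem hmem (fun _ => g (N t, N₁ t).1 (N t, N₁ t).2)).symm
      · intro p hp hne
        apply indicator_of_notMem
        rintro ⟨_, h1, h2⟩
        exact hne (Prod.ext h1.symm h2.symm)
      · intro h; exact absurd hq h
  rw [setIntegral_congr_fun measurableSet_Ioi hpt, integral_finset_sum]
  · refine Finset.sum_congr rfl fun p hp => ?_
    rw [integral_indicator_const _ (hAmeas p), measureReal_def, Measure.restrict_apply (hAmeas p),
      inter_eq_self_of_subset_left (fun t ht => ht.1), smul_eq_mul]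
  · intro p hp
    rw [integrable_indicator_iff (hAmeas p)]
    exact integrableOn_const (lt_of_le_of_lt (Measure.restrict_apply_le _ _) (hAfin p hp)).ne

theorem ustar_second_derivative_concavity
    (N N₁ : ℝ → ℝ) (hN : IsDistrib N) (hN₁ : IsDistrib N₁)
    (hNsupp : ∃ T : ℝ, ∀ t ≥ T, N t = 0)
    (hN₁supp : ∃ T : ℝ, ∀ t ≥ T, N₁ t = 0)
    (hNfin : (range N).Finite) (hN₁fin : (range N₁).Finite)
    (θ : ℝ) (hθ : θ ∈ Ioo (0 : ℝ) 1) :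
    (uFn (fun t => |N₁ t - N t|)) ^ 2 / uFn (fun t => N t + θ * (N₁ t - N t))
        ≤ -(iteratedDeriv 2 (fun ϑ => ustarFn (fun t => N t + ϑ * (N₁ t - N t))) θ) ∧
    (uFn (fun t => N₁ t - N t)) ^ 2 / uFn (fun t => N t + θ * (N₁ t - N t))
        ≤ (uFn (fun t => |N₁ t - N t|)) ^ 2 / uFn (fun t => N t + θ * (N₁ t - N t)) := by
  classical
  obtain ⟨T₀, hT₀⟩ := hNsupp
  obtain ⟨T₁, hT₁⟩ := hN₁supp
  have hTsupp : ∀ t ≥ max T₀ T₁, N t = 0 ∧ N₁ t = 0 := fun t ht =>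
    ⟨hT₀ t (le_trans (le_max_left _ _) ht), hT₁ t (le_trans (le_max_right _ _) ht)⟩
  set F : Finset (ℝ × ℝ) := ((hNfin.prod hN₁fin).toFinset).erase ((0:ℝ),(0:ℝ)) with hFdef
  have hFmem : ∀ t, 0 < t → (N t, N₁ t) ≠ ((0:ℝ),(0:ℝ)) → (N t, N₁ t) ∈ F := fun t ht hne =>
    Finset.mem_erase.2 ⟨hne, (hNfin.prod hN₁fin).mem_toFinset.2 ⟨mem_range_self t, mem_range_self t⟩⟩
  have h00 : ((0:ℝ),(0:ℝ)) ∉ F := fun h => (Finset.mem_erase.1 h).1 rfl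
  set c : ℝ × ℝ → ℝ := fun p => (volume {t : ℝ | 0 < t ∧ N t = p.1 ∧ N₁ t = p.2}).toReal
    with hcdef
  have hc0 : ∀ p, 0 ≤ c p := fun p => ENNReal.toReal_nonneg
  have key : ∀ g : ℝ → ℝ → ℝ, g 0 0 = 0 →
      (∫ t in Ioi (0:ℝ), g (N t) (N₁ t)) = ∑ p ∈ F, c p * g p.1 p.2 :=
    fun g hg => integral_decomp N N₁ hN hN₁ _ hTsupp F hFmem h00 g hg
  -- positivity dichotomy
  have hspos : ∀ p ∈ F, c p ≠ 0 → ∀ ϑ ∈ Ioo (0:ℝ) 1, 0 < p.1 + ϑ * (p.2 - p.1) := by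
    intro p hp hcp ϑ hϑ
    rcases eq_empty_or_nonempty {t : ℝ | 0 < t ∧ N t = p.1 ∧ N₁ t = p.2} with he | ⟨t, ht0, ht1, ht2⟩
    · exact absurd (by rw [hcdef]; simp [he]) hcp
    · obtain ⟨l1, l2⟩ := hN.1 t ht0
      obtain ⟨m1, m2⟩ := hN₁.1 t ht0
      rw [ht1] at l1 l2; rw [ht2] at m1 m2
      have hne : p ≠ ((0:ℝ),(0:ℝ)) := fun hh => h00 (hh ▸ hp)
      have hor : 0 < p.1 ∨ 0 < p.2 := by
        by_contra hcon; push_neg at hcon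
        exact hne (Prod.ext (le_antisymm hcon.1 l1) (le_antisymm hcon.2 m1))
      rcases hor with h | h
      · nlinarith [mul_pos (sub_pos.2 hϑ.2) h, mul_nonneg hϑ.1.le m1]
      · nlinarith [mul_pos hϑ.1 h, mul_nonneg (sub_pos.2 hϑ.2).le l1]
  -- the function along the segment and its derivatives
  set G : ℝ → ℝ := fun ϑ => ∑ p ∈ F, c p * psi0 (p.1 + ϑ * (p.2 - p.1)) with hGdef
  have hust : (fun ϑ => ustarFn (fun t => N t + ϑ * (N₁ t - N t))) = G := by
    funext ϑ
    exact key (fun a b => psi0 (a + ϑ * (b - a))) (by norm_num [psi0])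
  set H : ℝ → ℝ := fun ϑ => ∑ p ∈ F, c p * (-Real.log (p.1 + ϑ * (p.2 - p.1)) * (p.2 - p.1))
    with hHdef
  have hG' : ∀ ϑ ∈ Ioo (0:ℝ) 1, HasDerivAt G (H ϑ) ϑ := by
    intro ϑ hϑ
    apply HasDerivAt.fun_sum
    intro p hp
    by_cases hcp : c p = 0
    · simp only [hcp, zero_mul]
      exact hasDerivAt_const ϑ 0
    · have hs := hspos p hp hcp ϑ hϑ
      have h1 : HasDerivAt (fun x : ℝ => p.1 + x * (p.2 - p.1)) (p.2 - p.1) ϑ := by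
        simpa using ((hasDerivAt_id ϑ).mul_const (p.2 - p.1)).const_add p.1
      exact ((psi0_hasDerivAt hs).comp ϑ h1).const_mul (c p)
  set D : ℝ := ∑ p ∈ F,
      c p * (-((p.1 + θ * (p.2 - p.1))⁻¹ * (p.2 - p.1)) * (p.2 - p.1)) with hDdef
  have hH' : HasDerivAt H D θ := by
    apply HasDerivAt.fun_sum
    intro p hp
    by_cases hcp : c p = 0
    · simp only [hcp, zero_mul]
      exact hasDerivAt_const θ 0
    · have hs := hspos p hp hcp θ hθ
      have h1 : HasDerivAt (fun x : ℝ => p.1 + x * (p.2 - p.1)) (p.2 - p.1) θ := by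
        simpa using ((hasDerivAt_id θ).mul_const (p.2 - p.1)).const_add p.1
      exact (((Real.hasDerivAt_log hs.ne').comp θ h1).neg.mul_const (p.2 - p.1)).const_mul (c p)
  have hIter : iteratedDeriv 2 (fun ϑ => ustarFn (fun t => N t + ϑ * (N₁ t - N t))) θ = D := by
    rw [hust, show (2:ℕ) = 1 + 1 from rfl, iteratedDeriv_succ, iteratedDeriv_one]
    have hev : deriv G =ᶠ[nhds θ] H := by
      filter_upwards [isOpen_Ioo.mem_nhds hθ] with x hx
      exact (hG' x hx).deriv
    rw [Filter.EventuallyEq.deriv_eq hev]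
    exact hH'.deriv
  -- the integrals as sums
  have hu : uFn (fun t => N t + θ * (N₁ t - N t)) = ∑ p ∈ F, c p * (p.1 + θ * (p.2 - p.1)) :=
    key (fun a b => a + θ * (b - a)) (by ring)
  have habs : uFn (fun t => |N₁ t - N t|) = ∑ p ∈ F, c p * |p.2 - p.1| :=
    key (fun a b => |b - a|) (by simp)
  have hdel : uFn (fun t => N₁ t - N t) = ∑ p ∈ F, c p * (p.2 - p.1) :=
    key (fun a b => b - a) (by ring)
  have hunn : 0 ≤ ∑ p ∈ F, c p * (p.1 + θ * (p.2 - p.1)) := by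
    apply Finset.sum_nonneg
    intro p hp
    by_cases hcp : c p = 0
    · simp [hcp]
    · exact mul_nonneg (hc0 p) (hspos p hp hcp θ hθ).le
  have hnegD : -D = ∑ p ∈ F, c p * ((p.1 + θ * (p.2 - p.1))⁻¹ * (p.2 - p.1) ^ 2) := by
    rw [hDdef, ← Finset.sum_neg_distrib]
    exact Finset.sum_congr rfl fun p _ => by ring
  have hQnn : 0 ≤ ∑ p ∈ F, c p * ((p.1 + θ * (p.2 - p.1))⁻¹ * (p.2 - p.1) ^ 2) := by
    apply Finset.sum_nonneg
    intro p hp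
    by_cases hcp : c p = 0
    · simp [hcp]
    · exact mul_nonneg (hc0 p)
        (mul_nonneg (inv_nonneg.2 (hspos p hp hcp θ hθ).le) (sq_nonneg _))
  -- Cauchy–Schwarz
  have hCS := Finset.sum_mul_sq_le_sq_mul_sq F
    (fun p => Real.sqrt (c p * (p.1 + θ * (p.2 - p.1))⁻¹) * |p.2 - p.1|)
    (fun p => Real.sqrt (c p * (p.1 + θ * (p.2 - p.1))))
  have e1 : ∑ p ∈ F, (Real.sqrt (c p * (p.1 + θ * (p.2 - p.1))⁻¹) * |p.2 - p.1|) *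
      Real.sqrt (c p * (p.1 + θ * (p.2 - p.1))) = ∑ p ∈ F, c p * |p.2 - p.1| := by
    refine Finset.sum_congr rfl fun p hp => ?_
    by_cases hcp : c p = 0
    · simp [hcp]
    · have hs := hspos p hp hcp θ hθ
      have hcs : c p * (p.1 + θ * (p.2 - p.1))⁻¹ * (c p * (p.1 + θ * (p.2 - p.1)))
          = c p ^ 2 := by
        field_simp
      rw [mul_right_comm, ← Real.sqrt_mul (mul_nonneg (hc0 p) (inv_nonneg.2 hs.le)), hcs,
        Real.sqrt_sq (hc0 p)]
  have e2 : ∑ p ∈ F, (Real.sqrt (c p * (p.1 + θ * (p.2 - p.1))⁻¹) * |p.2 - p.1|) ^ 2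
      = ∑ p ∈ F, c p * ((p.1 + θ * (p.2 - p.1))⁻¹ * (p.2 - p.1) ^ 2) := by
    refine Finset.sum_congr rfl fun p hp => ?_
    by_cases hcp : c p = 0
    · simp [hcp]
    · have hs := hspos p hp hcp θ hθ
      rw [mul_pow, Real.sq_sqrt (mul_nonneg (hc0 p) (inv_nonneg.2 hs.le)), sq_abs]
      ring
  have e3 : ∑ p ∈ F, (Real.sqrt (c p * (p.1 + θ * (p.2 - p.1)))) ^ 2
      = ∑ p ∈ F, c p * (p.1 + θ * (p.2 - p.1)) := by
    refine Finset.sum_congr rfl fun p hp => ?_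
    by_cases hcp : c p = 0
    · simp [hcp]
    · exact Real.sq_sqrt (mul_nonneg (hc0 p) (hspos p hp hcp θ hθ).le)
  rw [e1, e2, e3] at hCS
  constructor
  · rw [habs, hu, hIter]
    rcases hunn.eq_or_lt with hu0 | hupos
    · rw [← hu0, div_zero]
      rw [show -D = _ from hnegD]
      exact hQnn
    · rw [div_le_iff₀ hupos, show -D = _ from hnegD]
      exact hCS
  · rw [hdel, habs, hu]
    have h1 : |∑ p ∈ F, c p * (p.2 - p.1)| ≤ ∑ p ∈ F, c p * |p.2 - p.1| := by
      refine le_trans (Finset.abs_sum_le_sum_abs _ _) ?_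
      refine Finset.sum_le_sum fun p hp => ?_
      rw [abs_mul, abs_of_nonneg (hc0 p)]
    have h2 : (∑ p ∈ F, c p * (p.2 - p.1)) ^ 2 ≤ (∑ p ∈ F, c p * |p.2 - p.1|) ^ 2 := by
      rw [← sq_abs (∑ p ∈ F, c p * (p.2 - p.1))]
      exact pow_le_pow_left₀ (abs_nonneg _) h1 2
    rcases hunn.eq_or_lt with hu0 | hupos
    · rw [← hu0, div_zero, div_zero]
    · exact (div_le_div_iff_of_pos_right hupos).2 h2
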